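/- Let k ≥ 1, and let 0 < r < r'. Let F : ℂ^k → ℂ be holomorphic on the polydisc {|z_i| < r' for all i} and symmetric under all permutations of its arguments. Let f be holomorphic on {s ∈ ℂ : 0 < |s| < 2r'} with a simple pole at s = 0 of residue 1 (i.e. f(s) − 1/s extends holomorphically to |s| < 2r'). Set K(z_1,…,z_k) = F(z_1,…,z_k) ∏_{1 ≤ i ≤ j ≤ k} f(z_i + z_j). Let α_1,…,α_k ∈ ℂ satisfy 0 < |α_j| < r for all j and α_i + α_j ≠ 0, α_i − α_j ≠ 0 whenever i ≠ j. Then Σ_{ε ∈ {−1,1}^k} K(ε_1 α_1, …, ε_k α_k) = ((−1)^{k(k−1)/2} 2^k)/(k! (2πi)^k) · ∮_{|z_1|=r} ⋯ ∮_{|z_k|=r} K(z_1,…,z_k) · Δ(z_1²,…,z_k²)² · (∏_{i=1}^k z_i) / ∏_{i=1}^k ∏_{j=1}^k ((z_i − α_j)(z_i + α_j)) dz_1 ⋯ dz_k, where the contours are the counterclockwise circles of radius r centred at 0. -/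

import Mathlib

open Finset

/-- The `k`-fold iterated contour integral over counterclockwise circles of
radius `r` centred at `0`, one in each variable. -/
noncomputable def iterCircleIntegral : (k : ℕ) → ((Fin k → ℂ) → ℂ) → ℝ → ℂ
  | 0, f, _ => f (fun i => i.elim0)
  | (k + 1), f, r => ∮ z in C(0, r), iterCircleIntegral k (fun w => f (Fin.cons z w)) r

namespace CFKRSAux
open Metric Complex
open scoped Real


/-- circle integral of a finite sum -/
lemma circleIntegral_finset_sum {ι : Type*} (s : Finset ι) (f : ι → ℂ → ℂ) (c : ℂ) (R : ℝ)
    (h : ∀ i ∈ s, CircleIntegrable (f i) c R) :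
    (∮ z in C(c, R), ∑ i ∈ s, f i z) = ∑ i ∈ s, ∮ z in C(c, R), f i z := by
  simp only [circleIntegral]
  rw [← intervalIntegral.integral_finset_sum (fun i hi => (h i hi).out)]
  congr 1; funext θ
  rw [Finset.smul_sum]

/-- partial fraction decomposition -/
lemma partial_fraction {ι : Type*} [DecidableEq ι] (s : Finset ι) (hs : s.Nonempty) (β : ι → ℂ)
    (hβ : Set.InjOn β s) :
    ∀ z : ℂ, (∀ t ∈ s, z ≠ β t) →
      (∏ t ∈ s, (z - β t))⁻¹
        = ∑ t ∈ s, (z - β t)⁻¹ * (∏ u ∈ s.erase t, (β t - β u))⁻¹ := by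
  induction hs using Finset.Nonempty.cons_induction with
  | singleton a => intro z _; simp
  | cons a s ha hs ih =>
    have hβs : Set.InjOn β s := hβ.mono (by intro x hx; exact Finset.mem_cons_of_mem hx)
    have hane : ∀ t ∈ s, β a ≠ β t := by
      intro t ht he
      exact ha (by rwa [hβ (Finset.mem_cons_self a s) (Finset.mem_cons_of_mem ht) he])
    intro z hz
    have hza : z ≠ β a := hz a (Finset.mem_cons_self a s)
    have hzs : ∀ t ∈ s, z ≠ β t := fun t ht => hz t (Finset.mem_cons_of_mem ht)
    have key := ih hβs (β a) hane
    rw [Finset.prod_cons, mul_inv, ih hβs z hzs, Finset.mul_sum]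
    rw [Finset.sum_cons]
    have herase : (Finset.cons a s ha).erase a = s := by
      rw [Finset.cons_eq_insert, Finset.erase_insert ha]
    rw [herase]
    have hstep : ∀ t ∈ s,
        (z - β a)⁻¹ * ((z - β t)⁻¹ * (∏ u ∈ s.erase t, (β t - β u))⁻¹)
          = (z - β t)⁻¹ * (∏ u ∈ (Finset.cons a s ha).erase t, (β t - β u))⁻¹
            - (z - β a)⁻¹ * ((β t - β a)⁻¹ * (∏ u ∈ s.erase t, (β t - β u))⁻¹) := by
      intro t ht
      have hta : t ≠ a := fun he => ha (he ▸ ht)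
      have herase2 : (Finset.cons a s ha).erase t = Finset.cons a (s.erase t)
          (fun hmem => ha (Finset.mem_of_mem_erase hmem)) := by
        ext x
        simp only [Finset.mem_erase, Finset.mem_cons]
        constructor
        · rintro ⟨hxt, (rfl | hx)⟩
          · exact Or.inl rfl
          · exact Or.inr ⟨hxt, hx⟩
        · rintro (rfl | ⟨hxt, hx⟩)
          · exact ⟨fun he => hta he.symm, Or.inl rfl⟩
          · exact ⟨hxt, Or.inr hx⟩
      rw [herase2, Finset.prod_cons, mul_inv]
      have h1 : z - β a ≠ 0 := sub_ne_zero.mpr hza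
      have h2 : z - β t ≠ 0 := sub_ne_zero.mpr (hzs t ht)
      have h3 : β t - β a ≠ 0 := sub_ne_zero.mpr fun he => (hane t ht) he.symm
      have base : (z - β a)⁻¹ * (z - β t)⁻¹
          = (β t - β a)⁻¹ * (z - β t)⁻¹ - (β t - β a)⁻¹ * (z - β a)⁻¹ := by
        field_simp
        ring
      rw [← mul_assoc, base]
      ring
    rw [Finset.sum_congr rfl hstep, Finset.sum_sub_distrib, ← Finset.mul_sum]
    have hsum : ∑ t ∈ s, (β t - β a)⁻¹ * (∏ u ∈ s.erase t, (β t - β u))⁻¹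
        = - (∏ t ∈ s, (β a - β t))⁻¹ := by
      rw [key, ← Finset.sum_neg_distrib]
      refine Finset.sum_congr rfl fun t ht => ?_
      rw [← neg_mul, ← inv_neg, neg_sub]
    rw [hsum]
    ring




/-- evaluation of one circle integral of `φ z / ∏ (z - β t)` by residues -/
lemma circleIntegral_prod_inv {ι : Type*} [DecidableEq ι] {r R : ℝ}
    (hr : 0 < r) (hrR : r < R) (s : Finset ι) (hs : s.Nonempty) (β : ι → ℂ)
    (hβ : Set.InjOn β s) (hβr : ∀ t ∈ s, ‖β t‖ < r)
    (φ : ℂ → ℂ) (hφ : DifferentiableOn ℂ φ (ball (0 : ℂ) R)) :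
    (∮ z in C(0, r), φ z * (∏ t ∈ s, (z - β t))⁻¹)
      = (2 * Real.pi * I) * ∑ t ∈ s, φ (β t) * (∏ u ∈ s.erase t, (β t - β u))⁻¹ := by
  have hzne : ∀ z ∈ sphere (0 : ℂ) r, ∀ t ∈ s, z ≠ β t := by
    intro z hz t ht he
    rw [mem_sphere_zero_iff_norm] at hz
    rw [he] at hz
    exact absurd hz (ne_of_lt (by simpa using hβr t ht))
  have h1 : Set.EqOn (fun z => φ z * (∏ t ∈ s, (z - β t))⁻¹)
      (fun z => ∑ t ∈ s, (z - β t)⁻¹ * (φ z * (∏ u ∈ s.erase t, (β t - β u))⁻¹))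
      (sphere (0 : ℂ) r) := by
    intro z hz
    simp only
    rw [partial_fraction s hs β hβ z (hzne z hz), Finset.mul_sum]
    exact Finset.sum_congr rfl fun t ht => by ring
  rw [circleIntegral.integral_congr hr.le h1]
  have hφc : ContinuousOn φ (sphere (0 : ℂ) r) := by
    refine hφ.continuousOn.mono ?_
    intro z hz
    rw [mem_sphere_zero_iff_norm] at hz
    rw [mem_ball_zero_iff, hz]
    exact hrR
  have hint : ∀ t ∈ s, CircleIntegrable
      (fun z => (z - β t)⁻¹ * (φ z * (∏ u ∈ s.erase t, (β t - β u))⁻¹)) 0 r := by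
    intro t ht
    refine ContinuousOn.circleIntegrable hr.le ?_
    refine ContinuousOn.mul ?_ (hφc.mul continuousOn_const)
    refine ContinuousOn.inv₀ (by fun_prop) ?_
    intro z hz
    exact sub_ne_zero.mpr (hzne z hz t ht)
  rw [circleIntegral_finset_sum s _ 0 r hint, Finset.mul_sum]
  refine Finset.sum_congr rfl fun t ht => ?_
  have hd : DifferentiableOn ℂ (fun z => φ z * (∏ u ∈ s.erase t, (β t - β u))⁻¹)
      (closedBall (0 : ℂ) r) := by
    refine DifferentiableOn.mul ?_ (differentiableOn_const _)
    exact hφ.mono (fun z hz => by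
      rw [mem_ball_zero_iff]
      rw [mem_closedBall_zero_iff] at hz
      exact lt_of_le_of_lt hz hrR)
  have hw : β t ∈ ball (0 : ℂ) r := by
    rw [mem_ball_zero_iff]
    simpa using hβr t ht
  have := hd.circleIntegral_sub_inv_smul hw
  simp only [smul_eq_mul] at this
  rw [this]

/-- congruence for the iterated circle integral: only values on the torus matter -/
lemma iterCircleIntegral_congr {k : ℕ} {r : ℝ} (hr : 0 ≤ r) {f g : (Fin k → ℂ) → ℂ}
    (h : ∀ z : Fin k → ℂ, (∀ i, ‖z i‖ = r) → f z = g z) :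
    iterCircleIntegral k f r = iterCircleIntegral k g r := by
  induction k with
  | zero =>
    simp only [iterCircleIntegral]
    exact h _ (fun i => Fin.elim0 i)
  | succ k ih =>
    simp only [iterCircleIntegral]
    refine circleIntegral.integral_congr hr fun z hz => ?_
    refine ih fun w hw => ?_
    refine h _ fun i => ?_
    refine Fin.cases ?_ (fun j => ?_) i
    · rw [mem_sphere_zero_iff_norm] at hz
      simpa using hz
    · simpa using hw j
/-- full evaluation of the iterated circle integral by iterated residues -/
lemma iterCircleIntegral_eval {ι : Type*} [Fintype ι] [DecidableEq ι] [Nonempty ι]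
    {r R : ℝ} (hr : 0 < r) (hrR : r < R) (β : ι → ℂ)
    (hβ : Function.Injective β) (hβr : ∀ t, ‖β t‖ < r) :
    ∀ (k : ℕ) (N : (Fin k → ℂ) → ℂ),
      DifferentiableOn ℂ N {z : Fin k → ℂ | ∀ i, ‖z i‖ < R} →
      iterCircleIntegral k (fun z => N z * (∏ i, ∏ t, (z i - β t))⁻¹) r
        = (2 * Real.pi * I) ^ k *
          ∑ c : Fin k → ι, N (fun i => β (c i)) *
            (∏ i, ∏ t ∈ (univ : Finset ι).erase (c i), (β (c i) - β t))⁻¹ := by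
  have hopen : ∀ m : ℕ, IsOpen {z : Fin m → ℂ | ∀ i, ‖z i‖ < R} := by
    intro m
    have : {z : Fin m → ℂ | ∀ i, ‖z i‖ < R}
        = Set.pi Set.univ (fun _ : Fin m => ball (0 : ℂ) R) := by
      ext z
      simp [Set.mem_pi, mem_ball_zero_iff]
    rw [this]
    exact isOpen_set_pi Set.finite_univ (fun _ _ => isOpen_ball)
  intro k
  induction k with
  | zero =>
    intro N hN
    simp only [iterCircleIntegral, pow_zero, one_mul]
    rw [Fintype.sum_eq_single (default : Fin 0 → ι) (fun c hc =>
      absurd (Subsingleton.elim c default) hc)]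
    simp only [Finset.univ_eq_empty, Finset.prod_empty, inv_one, mul_one]
    exact congrArg N (Subsingleton.elim _ _)
  | succ k ih =>
    intro N hN
    -- the map `w ↦ Fin.cons z w` is differentiable
    have hconsdiff : ∀ z : ℂ, Differentiable ℂ
        (fun w : Fin k → ℂ => (Fin.cons z w : Fin (k+1) → ℂ)) := by
      intro z
      rw [differentiable_pi]
      intro i
      refine Fin.cases ?_ (fun j => ?_) i
      · simpa using differentiable_const z
      · simpa using differentiable_apply (𝕜 := ℂ) (i := j)
    have hconsdiff' : ∀ v : Fin k → ℂ, Differentiable ℂ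
        (fun z : ℂ => (Fin.cons z v : Fin (k+1) → ℂ)) := by
      intro v
      rw [differentiable_pi]
      intro i
      refine Fin.cases ?_ (fun j => ?_) i
      · simpa using differentiable_id
      · simpa using differentiable_const (v j)
    show (∮ z in C(0, r), iterCircleIntegral k
        (fun w => N (Fin.cons z w) * (∏ i, ∏ t, ((Fin.cons z w : Fin (k+1) → ℂ) i - β t))⁻¹) r)
      = _
    -- step 1: congruence on the circle to apply the induction hypothesis
    have step1 : Set.EqOn
        (fun z => iterCircleIntegral k
          (fun w => N (Fin.cons z w) * (∏ i, ∏ t, ((Fin.cons z w : Fin (k+1) → ℂ) i - β t))⁻¹) r)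
        (fun z => (2 * Real.pi * I) ^ k *
          ∑ c : Fin k → ι, (N (Fin.cons z (fun i => β (c i))) * (∏ t, (z - β t))⁻¹) *
            (∏ i, ∏ t ∈ (univ : Finset ι).erase (c i), (β (c i) - β t))⁻¹)
        (sphere (0 : ℂ) r) := by
      intro z hz
      rw [mem_sphere_zero_iff_norm] at hz
      simp only
      have hfun : (fun w : Fin k → ℂ =>
          N (Fin.cons z w) * (∏ i, ∏ t, ((Fin.cons z w : Fin (k+1) → ℂ) i - β t))⁻¹)
          = (fun w : Fin k → ℂ => (N (Fin.cons z w) * (∏ t, (z - β t))⁻¹) *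
              (∏ i, ∏ t, (w i - β t))⁻¹) := by
        funext w
        rw [Fin.prod_univ_succ]
        simp only [Fin.cons_zero, Fin.cons_succ]
        rw [mul_inv]
        ring
      rw [hfun]
      have hNz : DifferentiableOn ℂ
          (fun w : Fin k → ℂ => N (Fin.cons z w) * (∏ t, (z - β t))⁻¹)
          {w : Fin k → ℂ | ∀ i, ‖w i‖ < R} := by
        refine DifferentiableOn.mul ?_ (differentiableOn_const _)
        refine DifferentiableOn.comp hN ((hconsdiff z).differentiableOn) ?_
        intro w hw
        intro i
        refine Fin.cases ?_ (fun j => ?_) i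
        · simpa [hz] using hrR
        · simpa using hw j
      rw [ih _ hNz]
    rw [circleIntegral.integral_congr hr.le step1]
    -- step 2: pull out constants and sums, and evaluate each circle integral
    have step2 : ∀ c : Fin k → ι,
        (∮ z in C(0, r), (N (Fin.cons z (fun i => β (c i))) * (∏ t, (z - β t))⁻¹) *
            (∏ i, ∏ t ∈ (univ : Finset ι).erase (c i), (β (c i) - β t))⁻¹)
        = (2 * Real.pi * I) * ∑ t : ι,
            (N (Fin.cons (β t) (fun i => β (c i))) *
              (∏ i, ∏ u ∈ (univ : Finset ι).erase (c i), (β (c i) - β u))⁻¹) *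
            (∏ u ∈ (univ : Finset ι).erase t, (β t - β u))⁻¹ := by
      intro c
      have hfun2 : (fun z => (N (Fin.cons z (fun i => β (c i))) * (∏ t, (z - β t))⁻¹) *
            (∏ i, ∏ t ∈ (univ : Finset ι).erase (c i), (β (c i) - β t))⁻¹)
          = (fun z => (N (Fin.cons z (fun i => β (c i))) *
              (∏ i, ∏ t ∈ (univ : Finset ι).erase (c i), (β (c i) - β t))⁻¹) *
            (∏ t ∈ (univ : Finset ι), (z - β t))⁻¹) := by
        funext z
        ring
      rw [hfun2]
      have hφd : DifferentiableOn ℂ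
          (fun z => N (Fin.cons z (fun i => β (c i))) *
            (∏ i, ∏ t ∈ (univ : Finset ι).erase (c i), (β (c i) - β t))⁻¹)
          (ball (0 : ℂ) R) := by
        refine DifferentiableOn.mul ?_ (differentiableOn_const _)
        refine DifferentiableOn.comp hN ((hconsdiff' _).differentiableOn) ?_
        intro z hzR
        rw [mem_ball_zero_iff] at hzR
        intro i
        refine Fin.cases ?_ (fun j => ?_) i
        · simpa using hzR
        · simpa using lt_trans (hβr (c j)) hrR
      rw [circleIntegral_prod_inv hr hrR univ univ_nonempty β (hβ.injOn)
        (fun t _ => hβr t) _ hφd]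
    -- assemble
    have hpull : (∮ z in C(0, r), (2 * Real.pi * I) ^ k *
          ∑ c : Fin k → ι, (N (Fin.cons z (fun i => β (c i))) * (∏ t, (z - β t))⁻¹) *
            (∏ i, ∏ t ∈ (univ : Finset ι).erase (c i), (β (c i) - β t))⁻¹)
        = (2 * Real.pi * I) ^ k *
          ∑ c : Fin k → ι, ∮ z in C(0, r),
            (N (Fin.cons z (fun i => β (c i))) * (∏ t, (z - β t))⁻¹) *
            (∏ i, ∏ t ∈ (univ : Finset ι).erase (c i), (β (c i) - β t))⁻¹ := by
      have : ∀ c : Fin k → ι, CircleIntegrable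
          (fun z => (N (Fin.cons z (fun i => β (c i))) * (∏ t, (z - β t))⁻¹) *
            (∏ i, ∏ t ∈ (univ : Finset ι).erase (c i), (β (c i) - β t))⁻¹) 0 r := by
        intro c
        refine ContinuousOn.circleIntegrable hr.le ?_
        refine ContinuousOn.mul (ContinuousOn.mul ?_ ?_) continuousOn_const
        · refine ContinuousOn.comp (t := {w : Fin (k+1) → ℂ | ∀ i, ‖w i‖ < R})
            hN.continuousOn ((hconsdiff' _).continuous.continuousOn) ?_
          · intro z hzs
            rw [mem_sphere_zero_iff_norm] at hzs
            intro i
            refine Fin.cases ?_ (fun j => ?_) i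
            · simpa [hzs] using hrR
            · simpa using lt_trans (hβr (c j)) hrR

        · refine ContinuousOn.inv₀ (by fun_prop) ?_
          intro z hzs
          rw [mem_sphere_zero_iff_norm] at hzs
          refine Finset.prod_ne_zero_iff.mpr fun t _ => sub_ne_zero.mpr fun he => ?_
          rw [he] at hzs
          exact absurd hzs (ne_of_lt (by simpa using hβr t))
      calc (∮ z in C(0, r), (2 * Real.pi * I) ^ k *
            ∑ c : Fin k → ι, (N (Fin.cons z (fun i => β (c i))) * (∏ t, (z - β t))⁻¹) *
              (∏ i, ∏ t ∈ (univ : Finset ι).erase (c i), (β (c i) - β t))⁻¹)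
          = (2 * Real.pi * I) ^ k • ∮ z in C(0, r),
            ∑ c : Fin k → ι, (N (Fin.cons z (fun i => β (c i))) * (∏ t, (z - β t))⁻¹) *
              (∏ i, ∏ t ∈ (univ : Finset ι).erase (c i), (β (c i) - β t))⁻¹ := by
            rw [← circleIntegral.integral_smul]
            simp [smul_eq_mul]
        _ = _ := by
            rw [circleIntegral_finset_sum univ _ 0 r (fun c _ => this c)]
            simp [smul_eq_mul]
    rw [hpull]
    have step2' : ∑ c : Fin k → ι, (∮ z in C(0, r),
            (N (Fin.cons z (fun i => β (c i))) * (∏ t, (z - β t))⁻¹) *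
            (∏ i, ∏ t ∈ (univ : Finset ι).erase (c i), (β (c i) - β t))⁻¹)
        = (2 * Real.pi * I) * ∑ c : Fin k → ι, ∑ t : ι,
            (N (Fin.cons (β t) (fun i => β (c i))) *
              (∏ i, ∏ u ∈ (univ : Finset ι).erase (c i), (β (c i) - β u))⁻¹) *
            (∏ u ∈ (univ : Finset ι).erase t, (β t - β u))⁻¹ := by
      rw [Finset.mul_sum]
      exact Finset.sum_congr rfl fun c _ => step2 c
    rw [step2']
    -- step 3: reindex the double sum as a sum over `Fin (k+1) → ι`
    have step3 : ∑ c' : Fin (k+1) → ι, N (fun i => β (c' i)) *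
          (∏ i, ∏ t ∈ (univ : Finset ι).erase (c' i), (β (c' i) - β t))⁻¹
        = ∑ c : Fin k → ι, ∑ t : ι,
            (N (Fin.cons (β t) (fun i => β (c i))) *
              (∏ i, ∏ u ∈ (univ : Finset ι).erase (c i), (β (c i) - β u))⁻¹) *
            (∏ u ∈ (univ : Finset ι).erase t, (β t - β u))⁻¹ := by
      rw [Fintype.sum_equiv (Fin.consEquiv (fun _ : Fin (k+1) => ι)).symm _
        (fun p : ι × (Fin k → ι) =>
          (N (Fin.cons (β p.1) (fun i => β (p.2 i))) *
            (∏ i, ∏ u ∈ (univ : Finset ι).erase (p.2 i), (β (p.2 i) - β u))⁻¹) *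
          (∏ u ∈ (univ : Finset ι).erase p.1, (β p.1 - β u))⁻¹) ?_]
      · rw [Fintype.sum_prod_type, Finset.sum_comm]
      · intro c'
        simp only [Fin.consEquiv_symm_apply]
        have h1 : (fun i => β (c' i)) = Fin.cons (β (c' 0)) (fun i => β (Fin.tail c' i)) := by
          funext i
          refine Fin.cases ?_ (fun j => ?_) i
          · simp
          · simp [Fin.tail]
        have h2 : ∏ i : Fin (k+1), (∏ t ∈ (univ : Finset ι).erase (c' i), (β (c' i) - β t))
            = (∏ u ∈ (univ : Finset ι).erase (c' 0), (β (c' 0) - β u)) *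
              ∏ i : Fin k, ∏ u ∈ (univ : Finset ι).erase (Fin.tail c' i),
                (β (Fin.tail c' i) - β u) := by
          rw [Fin.prod_univ_succ]
          rfl
        rw [h1, h2, mul_inv]
        ring
    rw [← step3]
    rw [pow_succ]
    ring


/-- product over a filtered product set as a double product -/
lemma prod_filter_product {A B M : Type*} [CommMonoid M] (s : Finset A) (t : Finset B)
    (q : A → B → Prop) [DecidablePred fun p : A × B => q p.1 p.2] [∀ a, DecidablePred (q a)]
    (f : A → B → M) :
    ∏ p ∈ (s ×ˢ t).filter (fun p => q p.1 p.2), f p.1 p.2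
      = ∏ a ∈ s, ∏ b ∈ t.filter (q a), f a b := by
  rw [Finset.prod_sigma']
  refine Finset.prod_bij (fun p _ => (⟨p.1, p.2⟩ : Σ _ : A, B)) ?_ ?_ ?_ ?_
  · intro p hp
    simp only [Finset.mem_filter, Finset.mem_product] at hp
    simp only [Finset.mem_sigma, Finset.mem_filter]
    exact ⟨hp.1.1, hp.1.2, hp.2⟩
  · intro p hp p' hp' he
    cases p; cases p'
    simpa using he
  · intro q hq
    simp only [Finset.mem_sigma, Finset.mem_filter] at hq
    exact ⟨(q.1, q.2), by simp [Finset.mem_filter, Finset.mem_product, hq.1, hq.2.1, hq.2.2], rfl⟩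
  · intro p hp; rfl

/-- swapping the coordinates in a product over strictly-lower pairs -/
lemma prod_swap_lt {M : Type*} [CommMonoid M] {k : ℕ} (f : Fin k × Fin k → M) :
    ∏ p ∈ univ.filter (fun p : Fin k × Fin k => p.2 < p.1), f p
      = ∏ p ∈ univ.filter (fun p : Fin k × Fin k => p.1 < p.2), f p.swap := by
  refine Finset.prod_bij (fun p _ => p.swap) ?_ ?_ ?_ ?_
  · intro p hp
    rw [Finset.mem_filter] at hp
    simp only [Finset.mem_filter, Finset.mem_univ, true_and, Prod.fst_swap, Prod.snd_swap]
    exact hp.2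
  · intro p _ p' _ he
    have h2 : p.swap.swap = p'.swap.swap := by rw [he]
    simpa using h2
  · intro p hp
    refine ⟨p.swap, ?_, by simp⟩
    rw [Finset.mem_filter] at hp
    simp only [Finset.mem_filter, Finset.mem_univ, true_and, Prod.fst_swap, Prod.snd_swap]
    exact hp.2
  · intro p hp; simp

/-- splitting the product over `p.1 ≤ p.2` into diagonal and strict parts -/
lemma prod_split_le {M : Type*} [CommMonoid M] {k : ℕ} (f : Fin k × Fin k → M) :
    ∏ p ∈ univ.filter (fun p : Fin k × Fin k => p.1 ≤ p.2), f p
      = (∏ i : Fin k, f (i, i)) * ∏ p ∈ univ.filter (fun p : Fin k × Fin k => p.1 < p.2), f p := by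
  have h1 : univ.filter (fun p : Fin k × Fin k => p.1 ≤ p.2)
      = (univ.filter (fun p : Fin k × Fin k => p.1 = p.2)) ∪
        (univ.filter (fun p : Fin k × Fin k => p.1 < p.2)) := by
    rw [← Finset.filter_or]
    refine Finset.filter_congr fun p _ => ?_
    constructor
    · intro hle
      rcases eq_or_lt_of_le hle with he | hlt
      · exact Or.inl he
      · exact Or.inr hlt
    · rintro (he | hlt)
      · exact le_of_eq he
      · exact le_of_lt hlt
  have h2 : Disjoint (univ.filter (fun p : Fin k × Fin k => p.1 = p.2))
      (univ.filter (fun p : Fin k × Fin k => p.1 < p.2)) := by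
    rw [Finset.disjoint_filter]
    intro p _ he hlt
    exact absurd he (ne_of_lt hlt)
  rw [h1, Finset.prod_union h2]
  congr 1
  refine (Finset.prod_bij (fun i _ => ((i, i) : Fin k × Fin k)) ?_ ?_ ?_ ?_).symm
  · intro i _; simp
  · intro i _ i' _ he
    simpa [Prod.ext_iff] using he
  · intro p hp
    simp only [Finset.mem_filter, Finset.mem_univ, true_and] at hp
    exact ⟨p.1, Finset.mem_univ _, Prod.ext rfl hp⟩
  · intro i _; rfl

/-- permutation invariance of a product of a symmetric function over unordered pairs with
diagonal -/
lemma prod_pairs_le_perm {M : Type*} [CommMonoid M] {k : ℕ} (ψ : ℂ → ℂ → M)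
    (hψ : ∀ a b, ψ a b = ψ b a) (σ : Equiv.Perm (Fin k)) (z : Fin k → ℂ) :
    ∏ p ∈ univ.filter (fun p : Fin k × Fin k => p.1 ≤ p.2), ψ (z (σ p.1)) (z (σ p.2))
      = ∏ p ∈ univ.filter (fun p : Fin k × Fin k => p.1 ≤ p.2), ψ (z p.1) (z p.2) := by
  refine Finset.prod_bij
    (fun p _ => if σ p.1 ≤ σ p.2 then (σ p.1, σ p.2) else (σ p.2, σ p.1)) ?_ ?_ ?_ ?_
  · intro p _
    by_cases hc : σ p.1 ≤ σ p.2
    · simp [hc]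
    · simp only [if_neg hc, Finset.mem_filter, Finset.mem_univ, true_and]
      exact le_of_lt (lt_of_not_ge hc)
  · intro p hp p' hp' he
    simp only [Finset.mem_filter, Finset.mem_univ, true_and] at hp hp'
    by_cases hc : σ p.1 ≤ σ p.2 <;> by_cases hc' : σ p'.1 ≤ σ p'.2
    · rw [if_pos hc, if_pos hc'] at he
      rw [Prod.ext_iff] at he
      exact Prod.ext (σ.injective he.1) (σ.injective he.2)
    · rw [if_pos hc, if_neg hc'] at he
      rw [Prod.ext_iff] at he
      have h1 : p.1 = p'.2 := σ.injective he.1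
      have h2 : p.2 = p'.1 := σ.injective he.2
      have h3 : p'.1 = p'.2 := le_antisymm (hp' ) (h1 ▸ h2 ▸ hp)
      exact (hc' (le_of_eq (congrArg σ h3))).elim
    · rw [if_neg hc, if_pos hc'] at he
      rw [Prod.ext_iff] at he
      have h1 : p.2 = p'.1 := σ.injective he.1
      have h2 : p.1 = p'.2 := σ.injective he.2
      have h3 : p.1 = p.2 := le_antisymm hp (h1 ▸ h2 ▸ hp')
      exact (hc (le_of_eq (congrArg σ h3))).elim
    · rw [if_neg hc, if_neg hc'] at he
      rw [Prod.ext_iff] at he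
      exact Prod.ext (σ.injective he.2) (σ.injective he.1)
  · intro q hq
    simp only [Finset.mem_filter, Finset.mem_univ, true_and] at hq
    by_cases hc : σ.symm q.1 ≤ σ.symm q.2
    · refine ⟨(σ.symm q.1, σ.symm q.2), Finset.mem_filter.mpr ⟨Finset.mem_univ _, hc⟩, ?_⟩
      simp only [Equiv.apply_symm_apply]
      rw [if_pos hq]
    · refine ⟨(σ.symm q.2, σ.symm q.1), Finset.mem_filter.mpr
        ⟨Finset.mem_univ _, le_of_lt (lt_of_not_ge hc)⟩, ?_⟩
      simp only [Equiv.apply_symm_apply]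
      have hne : q.1 ≠ q.2 := fun he => hc (le_of_eq (by rw [he]))
      rw [if_neg (not_le.mpr (lt_of_le_of_ne hq hne))]
  · intro p hp
    by_cases hc : σ p.1 ≤ σ p.2
    · rw [if_pos hc]
    · rw [if_neg hc, hψ]

/-- permutation invariance, strict version -/
lemma prod_pairs_lt_perm {M : Type*} [CommMonoid M] {k : ℕ} (ψ : ℂ → ℂ → M)
    (hψ : ∀ a b, ψ a b = ψ b a) (σ : Equiv.Perm (Fin k)) (z : Fin k → ℂ) :
    ∏ p ∈ univ.filter (fun p : Fin k × Fin k => p.1 < p.2), ψ (z (σ p.1)) (z (σ p.2))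
      = ∏ p ∈ univ.filter (fun p : Fin k × Fin k => p.1 < p.2), ψ (z p.1) (z p.2) := by
  refine Finset.prod_bij
    (fun p _ => if σ p.1 < σ p.2 then (σ p.1, σ p.2) else (σ p.2, σ p.1)) ?_ ?_ ?_ ?_
  · intro p hp
    simp only [Finset.mem_filter, Finset.mem_univ, true_and] at hp
    have hne : σ p.1 ≠ σ p.2 := fun he => absurd (σ.injective he) (ne_of_lt hp)
    by_cases hc : σ p.1 < σ p.2
    · simp [hc]
    · simp only [if_neg hc, Finset.mem_filter, Finset.mem_univ, true_and]
      exact lt_of_le_of_ne (le_of_not_gt hc) (Ne.symm hne)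
  · intro p hp p' hp' he
    simp only [Finset.mem_filter, Finset.mem_univ, true_and] at hp hp'
    by_cases hc : σ p.1 < σ p.2 <;> by_cases hc' : σ p'.1 < σ p'.2
    · rw [if_pos hc, if_pos hc'] at he
      rw [Prod.ext_iff] at he
      exact Prod.ext (σ.injective he.1) (σ.injective he.2)
    · rw [if_pos hc, if_neg hc'] at he
      rw [Prod.ext_iff] at he
      have h1 : p.1 = p'.2 := σ.injective he.1
      have h2 : p.2 = p'.1 := σ.injective he.2
      exact absurd (h1 ▸ h2 ▸ hp : p'.2 < p'.1) (not_lt_of_gt hp')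
    · rw [if_neg hc, if_pos hc'] at he
      rw [Prod.ext_iff] at he
      have h1 : p.2 = p'.1 := σ.injective he.1
      have h2 : p.1 = p'.2 := σ.injective he.2
      exact absurd (h1 ▸ h2 ▸ hp' : p.2 < p.1) (not_lt_of_gt hp)
    · rw [if_neg hc, if_neg hc'] at he
      rw [Prod.ext_iff] at he
      exact Prod.ext (σ.injective he.2) (σ.injective he.1)
  · intro q hq
    simp only [Finset.mem_filter, Finset.mem_univ, true_and] at hq
    by_cases hc : σ.symm q.1 < σ.symm q.2
    · refine ⟨(σ.symm q.1, σ.symm q.2), Finset.mem_filter.mpr ⟨Finset.mem_univ _, hc⟩, ?_⟩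
      simp only [Equiv.apply_symm_apply]
      rw [if_pos hq]
    · refine ⟨(σ.symm q.2, σ.symm q.1), Finset.mem_filter.mpr
        ⟨Finset.mem_univ _, lt_of_le_of_ne (le_of_not_gt hc)
          (fun he => absurd (congrArg σ he) (by
            simp only [Equiv.apply_symm_apply]
            exact fun h => absurd h.symm (ne_of_lt hq)))⟩, ?_⟩
      simp only [Equiv.apply_symm_apply]
      rw [if_neg (not_lt_of_gt hq)]
  · intro p hp
    by_cases hc : σ p.1 < σ p.2
    · rw [if_pos hc]
    · rw [if_neg hc, hψ]

/-- the number of strictly increasing pairs -/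
lemma card_filter_lt (k : ℕ) :
    (univ.filter (fun p : Fin k × Fin k => p.1 < p.2)).card = k * (k - 1) / 2 := by
  have hswap : (univ.filter (fun p : Fin k × Fin k => p.2 < p.1)).card
      = (univ.filter (fun p : Fin k × Fin k => p.1 < p.2)).card := by
    refine Finset.card_bij (fun p _ => p.swap) ?_ ?_ ?_
    · intro p hp
      rw [Finset.mem_filter] at hp
      simp only [Finset.mem_filter, Finset.mem_univ, true_and, Prod.fst_swap, Prod.snd_swap]
      exact hp.2
    · intro p _ p' _ he
      have h2 : p.swap.swap = p'.swap.swap := by rw [he]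
      simpa using h2
    · intro p hp
      refine ⟨p.swap, ?_, by simp⟩
      rw [Finset.mem_filter] at hp
      simp only [Finset.mem_filter, Finset.mem_univ, true_and, Prod.fst_swap, Prod.snd_swap]
      exact hp.2
  have hunion : (univ : Finset (Fin k × Fin k)).filter (fun p => p.1 ≠ p.2)
      = (univ.filter (fun p : Fin k × Fin k => p.1 < p.2)) ∪
        (univ.filter (fun p : Fin k × Fin k => p.2 < p.1)) := by
    rw [← Finset.filter_or]
    refine Finset.filter_congr fun p _ => ?_
    constructor
    · intro hne
      rcases lt_or_gt_of_ne hne with hl | hg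
      · exact Or.inl hl
      · exact Or.inr hg
    · rintro (hl | hg)
      · exact ne_of_lt hl
      · exact (ne_of_lt hg).symm
  have hdisj : Disjoint (univ.filter (fun p : Fin k × Fin k => p.1 < p.2))
      (univ.filter (fun p : Fin k × Fin k => p.2 < p.1)) := by
    rw [Finset.disjoint_filter]
    intro p _ h1 h2
    exact absurd h1 (not_lt_of_gt h2)
  have hoff : (univ : Finset (Fin k × Fin k)).filter (fun p => p.1 ≠ p.2)
      = (univ : Finset (Fin k)).offDiag := by
    ext p
    simp [Finset.mem_offDiag]
  have hcard : ((univ : Finset (Fin k)).offDiag).card = k * k - k := by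
    rw [Finset.offDiag_card]
    simp
  have hthis := congrArg Finset.card hunion
  rw [hoff, hcard, Finset.card_union_of_disjoint hdisj, hswap] at hthis
  have hkk : k * k - k = k * (k - 1) := by
    cases k with
    | zero => simp
    | succ n =>
      simp only [Nat.succ_sub_one, Nat.mul_succ]
      omega
  omega



lemma differentiableAt_finset_prod {E : Type*} [NormedAddCommGroup E] [NormedSpace ℂ E]
    {ι : Type*} [DecidableEq ι] (s : Finset ι) (f : ι → E → ℂ) {x : E}
    (h : ∀ i ∈ s, DifferentiableAt ℂ (f i) x) :
    DifferentiableAt ℂ (fun y => ∏ i ∈ s, f i y) x := by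
  induction s using Finset.induction_on with
  | empty => simpa using differentiableAt_const (1 : ℂ)
  | @insert a s hni ih =>
    simp only [Finset.prod_insert hni]
    exact (h a (Finset.mem_insert_self a s)).mul
      (ih fun i hi => h i (Finset.mem_insert_of_mem hi))

/-- the `2k` poles `±α_j`, indexed by `Fin k × Bool` -/
def sgn {k : ℕ} (α : Fin k → ℂ) : Fin k × Bool → ℂ := fun t => if t.2 then α t.1 else -α t.1

/-- the regular part of `f` written multiplicatively: `f s = gfun h s / s` -/
def gfun (h : ℂ → ℂ) : ℂ → ℂ := fun s => 1 + s * h s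

/-- the regularized numerator -/
noncomputable def Nfun (k : ℕ) (F : (Fin k → ℂ) → ℂ) (h : ℂ → ℂ) : (Fin k → ℂ) → ℂ := fun z =>
  (2 ^ k : ℂ)⁻¹ * (F z *
    (∏ p ∈ univ.filter (fun p : Fin k × Fin k => p.1 ≤ p.2), gfun h (z p.1 + z p.2)) *
    (∏ p ∈ univ.filter (fun p : Fin k × Fin k => p.1 < p.2),
      ((z p.2 - z p.1) ^ 2 * (z p.1 + z p.2))))


variable {k : ℕ} {α : Fin k → ℂ}

lemma sgn_injective (hα : ∀ j, 0 < ‖α j‖)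
    (hα' : ∀ i j, i ≠ j → α i + α j ≠ 0 ∧ α i - α j ≠ 0) :
    Function.Injective (sgn α) := by
  rintro ⟨j, b⟩ ⟨j', b'⟩ he
  have hα0 : ∀ j, α j ≠ 0 := fun j h0 => by simpa [h0] using hα j
  have h2 : ∀ j : Fin k, α j + α j ≠ 0 := fun j => by
    rw [← two_mul]
    exact mul_ne_zero (two_ne_zero (α := ℂ)) (hα0 j)
  by_cases hjj : j = j'
  · subst hjj
    cases b <;> cases b' <;> simp only [sgn, if_true, if_false, Bool.false_eq_true] at he
    · rfl
    · exact absurd (by linear_combination -he : α j + α j = 0) (h2 j)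
    · exact absurd (by linear_combination he : α j + α j = 0) (h2 j)
    · rfl
  · exfalso
    cases b <;> cases b' <;> simp only [sgn, if_true, if_false, Bool.false_eq_true] at he
    · exact (hα' j j' hjj).2 (by linear_combination -he)
    · exact (hα' j j' hjj).1 (by linear_combination -he)
    · exact (hα' j j' hjj).1 (by linear_combination he)
    · exact (hα' j j' hjj).2 (by linear_combination he)

lemma abs_sgn (t : Fin k × Bool) : ‖sgn α t‖ = ‖α t.1‖ := by
  rcases t with ⟨j, b⟩
  cases b <;> simp [sgn]

/-- the inner denominator product over all poles -/
lemma prod_sgn_eq (zi : ℂ) :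
    ∏ t : Fin k × Bool, (zi - sgn α t) = ∏ j, ((zi - α j) * (zi + α j)) := by
  rw [Fintype.prod_prod_type]
  refine Finset.prod_congr rfl fun j _ => ?_
  rw [Fintype.prod_bool]
  simp [sgn, sub_neg_eq_add]

/-- symmetry of `Nfun` under permutations -/
lemma Nfun_symm {F : (Fin k → ℂ) → ℂ} {h : ℂ → ℂ}
    (hFsym : ∀ σ : Equiv.Perm (Fin k), ∀ z : Fin k → ℂ, F (z ∘ σ) = F z)
    (σ : Equiv.Perm (Fin k)) (z : Fin k → ℂ) :
    Nfun k F h (z ∘ σ) = Nfun k F h z := by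
  unfold Nfun
  rw [hFsym σ z]
  simp only [Function.comp_apply]
  rw [prod_pairs_le_perm (fun a b => gfun h (a + b)) (fun a b => by
    show gfun h (a + b) = gfun h (b + a)
    rw [add_comm]) σ z]
  rw [prod_pairs_lt_perm (fun a b => (b - a) ^ 2 * (a + b)) (fun a b => by
    show (b - a) ^ 2 * (a + b) = (a - b) ^ 2 * (b + a)
    ring) σ z]

/-- differentiability of `Nfun` on the polydisc -/
lemma Nfun_diff {r' : ℝ} (hr' : 0 < r') {F : (Fin k → ℂ) → ℂ} {h : ℂ → ℂ}
    (hF : DifferentiableOn ℂ F {z : Fin k → ℂ | ∀ i, ‖z i‖ < r'})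
    (hh : DifferentiableOn ℂ h (Metric.ball (0 : ℂ) (2 * r'))) :
    DifferentiableOn ℂ (Nfun k F h) {z : Fin k → ℂ | ∀ i, ‖z i‖ < r'} := by
  unfold Nfun
  have hopen : IsOpen {z : Fin k → ℂ | ∀ i, ‖z i‖ < r'} := by
    have : {z : Fin k → ℂ | ∀ i, ‖z i‖ < r'}
        = Set.pi Set.univ (fun _ : Fin k => ball (0 : ℂ) r') := by
      ext z
      simp [Set.mem_pi, mem_ball_zero_iff]
    rw [this]
    exact isOpen_set_pi Set.finite_univ (fun _ _ => isOpen_ball)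
  intro z hz
  refine DifferentiableAt.differentiableWithinAt ?_
  have hzi : ∀ i, ‖z i‖ < r' := hz
  refine (differentiableAt_const _).mul ?_
  refine DifferentiableAt.mul (DifferentiableAt.mul ?_ ?_) ?_
  · exact hF.differentiableAt (hopen.mem_nhds hz)
  · refine differentiableAt_finset_prod _ _ fun p _ => ?_
    have hsum : Differentiable ℂ (fun w : Fin k → ℂ => w p.1 + w p.2) :=
      (differentiable_apply p.1).add (differentiable_apply p.2)
    have hmem : ‖z p.1 + z p.2‖ < 2 * r' := by
      calc ‖z p.1 + z p.2‖ ≤ ‖z p.1‖ + ‖z p.2‖ :=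
            norm_add_le _ _
        _ < 2 * r' := by have := hzi p.1; have := hzi p.2; linarith
    have hg : DifferentiableAt ℂ (gfun h) (z p.1 + z p.2) := by
      refine DifferentiableAt.const_add _ ?_
      refine DifferentiableAt.mul differentiableAt_id ?_
      exact hh.differentiableAt (isOpen_ball.mem_nhds (by
        rw [mem_ball_zero_iff]; exact hmem))
    have hcomp := hg.comp z (hsum z)
    exact hcomp
  · refine differentiableAt_finset_prod _ _ fun p _ => ?_
    refine DifferentiableAt.mul (DifferentiableAt.pow ?_ 2) ?_
    · exact ((differentiable_apply p.2).sub (differentiable_apply p.1)) z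
    · exact ((differentiable_apply p.1).add (differentiable_apply p.2)) z

/-- the integrand of the statement agrees with the regularized form on the torus -/
lemma torus_eq {k : ℕ} {r r' : ℝ} (hr : 0 < r) (hrr' : r < r')
    {F : (Fin k → ℂ) → ℂ} {f h : ℂ → ℂ}
    (hfh : ∀ s ∈ Metric.ball (0 : ℂ) (2 * r'), s ≠ 0 → f s = 1 / s + h s)
    {α : Fin k → ℂ}
    {K : (Fin k → ℂ) → ℂ}
    (hK : ∀ z : Fin k → ℂ,
      K z = F z * ∏ p ∈ univ.filter (fun p : Fin k × Fin k => p.1 ≤ p.2), f (z p.1 + z p.2))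
    (z : Fin k → ℂ) (hz : ∀ i, ‖z i‖ = r) :
    K z * (∏ p ∈ univ.filter (fun p : Fin k × Fin k => p.1 < p.2),
        (z p.2 ^ 2 - z p.1 ^ 2)) ^ 2 * (∏ i, z i)
        / ∏ i, ∏ j, ((z i - α j) * (z i + α j))
      = Nfun k F h z * (∏ i, ∏ t : Fin k × Bool, (z i - sgn α t))⁻¹ := by
  have hzne : ∀ i, z i ≠ 0 := by
    intro i h0
    have h1 := hz i
    rw [h0] at h1
    simp only [norm_zero] at h1
    exact absurd h1.symm (ne_of_gt hr)
  have hden : ∏ i, ∏ t : Fin k × Bool, (z i - sgn α t)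
      = ∏ i, ∏ j, ((z i - α j) * (z i + α j)) :=
    Finset.prod_congr rfl fun i _ => prod_sgn_eq (z i)
  rw [hden, div_eq_mul_inv]
  by_cases hzz : ∀ p ∈ univ.filter (fun p : Fin k × Fin k => p.1 < p.2), z p.1 + z p.2 ≠ 0
  · have hle : ∀ p ∈ univ.filter (fun p : Fin k × Fin k => p.1 ≤ p.2), z p.1 + z p.2 ≠ 0 := by
      intro p hp
      rw [Finset.mem_filter] at hp
      rcases eq_or_lt_of_le hp.2 with he | hlt
      · have : z p.1 + z p.2 = 2 * z p.1 := by rw [← he]; ring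
        rw [this]
        exact mul_ne_zero two_ne_zero (hzne p.1)
      · exact hzz p (Finset.mem_filter.mpr ⟨hp.1, hlt⟩)
    have hball : ∀ p : Fin k × Fin k, z p.1 + z p.2 ∈ Metric.ball (0 : ℂ) (2 * r') := by
      intro p
      rw [mem_ball_zero_iff]
      calc ‖z p.1 + z p.2‖ ≤ ‖z p.1‖ + ‖z p.2‖ := norm_add_le _ _
        _ < 2 * r' := by
            have h1 : ‖z p.1‖ = r := by rw [hz p.1]
            have h2 : ‖z p.2‖ = r := by rw [hz p.2]
            rw [h1, h2]
            linarith
    have hfg : ∀ p ∈ univ.filter (fun p : Fin k × Fin k => p.1 ≤ p.2),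
        f (z p.1 + z p.2) = gfun h (z p.1 + z p.2) / (z p.1 + z p.2) := by
      intro p hp
      rw [hfh _ (hball p) (hle p hp)]
      unfold gfun
      field_simp [hle p hp]
    rw [hK z, Finset.prod_congr rfl hfg, Finset.prod_div_distrib]
    have hdiag : ∏ i, (z i + z i) = 2 ^ k * ∏ i, z i := by
      have h2 : ∀ i ∈ (univ : Finset (Fin k)), z i + z i = 2 * z i :=
        fun i _ => (two_mul (z i)).symm
      rw [Finset.prod_congr rfl h2, Finset.prod_mul_distrib, Finset.prod_const]
      congr 1
      rw [Finset.card_univ, Fintype.card_fin]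
    have hsplit := prod_split_le (M := ℂ) (k := k) (fun p => z p.1 + z p.2)
    have hQ : ∏ p ∈ univ.filter (fun p : Fin k × Fin k => p.1 < p.2), (z p.2 ^ 2 - z p.1 ^ 2)
        = ∏ p ∈ univ.filter (fun p : Fin k × Fin k => p.1 < p.2),
            ((z p.2 - z p.1) * (z p.1 + z p.2)) :=
      Finset.prod_congr rfl fun p _ => by ring
    have hQQ : (∏ p ∈ univ.filter (fun p : Fin k × Fin k => p.1 < p.2),
          ((z p.2 - z p.1) * (z p.1 + z p.2))) ^ 2
        = (∏ p ∈ univ.filter (fun p : Fin k × Fin k => p.1 < p.2),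
            ((z p.2 - z p.1) ^ 2 * (z p.1 + z p.2))) *
          ∏ p ∈ univ.filter (fun p : Fin k × Fin k => p.1 < p.2), (z p.1 + z p.2) := by
      rw [← Finset.prod_pow, ← Finset.prod_mul_distrib]
      exact Finset.prod_congr rfl fun p _ => by ring
    have hSlt_ne : ∏ p ∈ univ.filter (fun p : Fin k × Fin k => p.1 < p.2),
        (z p.1 + z p.2) ≠ 0 := Finset.prod_ne_zero_iff.mpr hzz
    have hP_ne : ∏ i, z i ≠ 0 := Finset.prod_ne_zero_iff.mpr (fun i _ => hzne i)
    have h2k : (2 : ℂ) ^ k ≠ 0 := pow_ne_zero _ two_ne_zero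
    unfold Nfun
    rw [hsplit, hdiag, hQ, hQQ]
    congr 1
    field_simp
  · push_neg at hzz
    obtain ⟨p, hp, hp0⟩ := hzz
    have hQ0 : ∏ p ∈ univ.filter (fun p : Fin k × Fin k => p.1 < p.2),
        (z p.2 ^ 2 - z p.1 ^ 2) = 0 := by
      refine Finset.prod_eq_zero hp ?_
      have he : z p.2 ^ 2 - z p.1 ^ 2 = (z p.2 - z p.1) * (z p.1 + z p.2) := by ring
      rw [he, hp0, mul_zero]
    have hN0 : Nfun k F h z = 0 := by
      unfold Nfun
      rw [Finset.prod_eq_zero hp (by rw [hp0, mul_zero])]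
      ring
    rw [hQ0, hN0]
    ring

/-- evaluation of the denominator factor at a pole -/
lemma D_eval {k : ℕ} (α : Fin k → ℂ) (ε : Fin k → Bool) (j : Fin k) :
    ∏ t ∈ (univ : Finset (Fin k × Bool)).erase (j, ε j), (sgn α (j, ε j) - sgn α t)
      = (2 * sgn α (j, ε j)) *
        ∏ j' ∈ (univ : Finset (Fin k)).erase j, (α j ^ 2 - α j' ^ 2) := by
  rw [← Finset.prod_filter_mul_prod_filter_not
    ((univ : Finset (Fin k × Bool)).erase (j, ε j)) (fun t => t.1 = j)]
  have h1 : ((univ : Finset (Fin k × Bool)).erase (j, ε j)).filter (fun t => t.1 = j)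
      = {(j, !(ε j))} := by
    ext t
    constructor
    · intro ht
      rw [Finset.mem_filter, Finset.mem_erase] at ht
      obtain ⟨⟨hne, -⟩, ht1⟩ := ht
      rw [Finset.mem_singleton]
      have ht2 : t.2 ≠ ε j := by
        intro h2
        exact hne (by rw [show t = (t.1, t.2) from rfl, ht1, h2])
      have ht2' : t.2 = !(ε j) := by
        cases hb : t.2 <;> cases hc : ε j <;> simp_all
      rw [show t = (t.1, t.2) from rfl, ht1, ht2']
    · intro ht
      rw [Finset.mem_singleton] at ht
      subst ht
      rw [Finset.mem_filter, Finset.mem_erase]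
      refine ⟨⟨?_, Finset.mem_univ _⟩, rfl⟩
      intro hcon
      rw [Prod.mk.injEq] at hcon
      have := hcon.2
      simp at this
  have h2 : ((univ : Finset (Fin k × Bool)).erase (j, ε j)).filter (fun t => ¬ t.1 = j)
      = ((univ : Finset (Fin k)).erase j) ×ˢ (univ : Finset Bool) := by
    ext t
    rw [Finset.mem_filter, Finset.mem_erase, Finset.mem_product, Finset.mem_erase]
    constructor
    · rintro ⟨⟨-, -⟩, ht1⟩
      exact ⟨⟨ht1, Finset.mem_univ _⟩, Finset.mem_univ _⟩
    · rintro ⟨⟨ht1, -⟩, -⟩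
      refine ⟨⟨?_, Finset.mem_univ _⟩, ht1⟩
      intro hcon
      exact ht1 (by rw [hcon])
  rw [h1, h2, Finset.prod_singleton, Finset.prod_product]
  have hfac : sgn α (j, ε j) - sgn α (j, !(ε j)) = 2 * sgn α (j, ε j) := by
    cases hε : ε j <;> simp [sgn] <;> ring
  have hinner : ∀ a : Fin k, (∏ b : Bool, (sgn α (j, ε j) - sgn α (a, b)))
      = α j ^ 2 - α a ^ 2 := by
    intro a
    rw [Fintype.prod_bool]
    cases hε : ε j <;> simp [sgn, sub_neg_eq_add] <;> ring
  rw [hfac]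
  congr 1
  exact Finset.prod_congr rfl fun a _ => hinner a

/-- evaluation of the full off-diagonal product -/
lemma E_eval {k : ℕ} (α : Fin k → ℂ) :
    ∏ j, ∏ j' ∈ (univ : Finset (Fin k)).erase j, (α j ^ 2 - α j' ^ 2)
      = (-1 : ℂ) ^ (univ.filter (fun p : Fin k × Fin k => p.1 < p.2)).card *
        (∏ p ∈ univ.filter (fun p : Fin k × Fin k => p.1 < p.2),
          (α p.2 ^ 2 - α p.1 ^ 2)) ^ 2 := by
  have hdisj : ∀ j : Fin k, Disjoint (univ.filter (fun x : Fin k => x < j))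
      (univ.filter (fun x : Fin k => j < x)) := by
    intro j
    rw [Finset.disjoint_filter]
    intro x _ h1 h2
    exact absurd h1 (not_lt_of_gt h2)
  have hsplit : ∀ j : Fin k, (univ : Finset (Fin k)).erase j
      = (univ.filter (fun x => x < j)) ∪ (univ.filter (fun x => j < x)) := by
    intro j
    rw [← Finset.filter_ne', ← Finset.filter_or]
    refine Finset.filter_congr fun x _ => ?_
    constructor
    · exact fun hh => lt_or_gt_of_ne hh
    · rintro (hh | hh)
      · exact ne_of_lt hh
      · exact (ne_of_lt hh).symm
  have step1 : ∏ j, ∏ j' ∈ (univ : Finset (Fin k)).erase j, (α j ^ 2 - α j' ^ 2)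
      = (∏ j, ∏ j' ∈ univ.filter (fun x => x < j), (α j ^ 2 - α j' ^ 2)) *
        ∏ j, ∏ j' ∈ univ.filter (fun x => j < x), (α j ^ 2 - α j' ^ 2) := by
    rw [← Finset.prod_mul_distrib]
    refine Finset.prod_congr rfl fun j _ => ?_
    rw [hsplit j, Finset.prod_union (hdisj j)]
  have step2 : ∏ j, ∏ j' ∈ univ.filter (fun x => x < j), (α j ^ 2 - α j' ^ 2)
      = ∏ p ∈ univ.filter (fun p : Fin k × Fin k => p.1 < p.2), (α p.2 ^ 2 - α p.1 ^ 2) := by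
    rw [← prod_filter_product (univ : Finset (Fin k)) (univ : Finset (Fin k))
      (fun a b => b < a) (fun a b => α a ^ 2 - α b ^ 2)]
    rw [Finset.univ_product_univ]
    rw [prod_swap_lt (fun p : Fin k × Fin k => α p.1 ^ 2 - α p.2 ^ 2)]
    rfl
  have step3 : ∏ j, ∏ j' ∈ univ.filter (fun x => j < x), (α j ^ 2 - α j' ^ 2)
      = ∏ p ∈ univ.filter (fun p : Fin k × Fin k => p.1 < p.2), (α p.1 ^ 2 - α p.2 ^ 2) := by
    rw [← prod_filter_product (univ : Finset (Fin k)) (univ : Finset (Fin k))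
      (fun a b => a < b) (fun a b => α a ^ 2 - α b ^ 2)]
    rw [Finset.univ_product_univ]
  rw [step1, step2, step3, ← Finset.prod_mul_distrib]
  have step4 : ∀ p ∈ univ.filter (fun p : Fin k × Fin k => p.1 < p.2),
      (α p.2 ^ 2 - α p.1 ^ 2) * (α p.1 ^ 2 - α p.2 ^ 2)
        = (-1 : ℂ) * (α p.2 ^ 2 - α p.1 ^ 2) ^ 2 := fun p _ => by ring
  rw [Finset.prod_congr rfl step4, Finset.prod_mul_distrib, Finset.prod_const,
    ← Finset.prod_pow]

/-- vanishing of `Nfun` at non-injective sign assignments -/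
lemma Nfun_bad {k : ℕ} (F : (Fin k → ℂ) → ℂ) (h : ℂ → ℂ) (α : Fin k → ℂ)
    (c : Fin k → Fin k × Bool) (hc : ¬ Function.Injective (fun i => (c i).1)) :
    Nfun k F h (fun i => sgn α (c i)) = 0 := by
  rw [Function.not_injective_iff] at hc
  obtain ⟨i, j, hij, hne⟩ := hc
  unfold Nfun
  have key : ∀ (a b : Fin k), a < b → (c a).1 = (c b).1 →
      ((sgn α (c b) - sgn α (c a)) ^ 2 * (sgn α (c a) + sgn α (c b))) = 0 := by
    intro a b _ hab
    cases h1 : (c a).2 <;> cases h2 : (c b).2 <;>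
      simp only [sgn, h1, h2, if_true, if_false, Bool.false_eq_true] <;>
      rw [hab] <;> ring
  rcases lt_or_gt_of_ne hne with hlt | hgt
  · have hp : (i, j) ∈ univ.filter (fun p : Fin k × Fin k => p.1 < p.2) := by
      rw [Finset.mem_filter]
      exact ⟨Finset.mem_univ _, hlt⟩
    rw [Finset.prod_eq_zero hp (key i j hlt hij)]
    ring
  · have hp : (j, i) ∈ univ.filter (fun p : Fin k × Fin k => p.1 < p.2) := by
      rw [Finset.mem_filter]
      exact ⟨Finset.mem_univ _, hgt⟩
    rw [Finset.prod_eq_zero hp (key j i hgt hij.symm)]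
    ring

/-- the sum over all pole assignments reduces to `k!` times the sum over sign patterns -/
lemma T_sum {k : ℕ} (F : (Fin k → ℂ) → ℂ) (h : ℂ → ℂ)
    (hFsym : ∀ σ : Equiv.Perm (Fin k), ∀ z : Fin k → ℂ, F (z ∘ σ) = F z)
    (α : Fin k → ℂ) :
    ∑ c : Fin k → Fin k × Bool, Nfun k F h (fun i => sgn α (c i)) *
        (∏ i, ∏ t ∈ (univ : Finset (Fin k × Bool)).erase (c i), (sgn α (c i) - sgn α t))⁻¹
      = (k.factorial : ℂ) * ∑ ε : Fin k → Bool,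
          Nfun k F h (fun j => sgn α (j, ε j)) *
            (∏ j, ∏ t ∈ (univ : Finset (Fin k × Bool)).erase (j, ε j),
              (sgn α (j, ε j) - sgn α t))⁻¹ := by
  classical
  have hzero : ∀ c ∈ (univ : Finset (Fin k → Fin k × Bool)),
      Nfun k F h (fun i => sgn α (c i)) *
        (∏ i, ∏ t ∈ (univ : Finset (Fin k × Bool)).erase (c i), (sgn α (c i) - sgn α t))⁻¹ ≠ 0
      → Function.Injective (fun i => (c i).1) := by
    intro c _ hTc
    by_contra hni
    exact hTc (by rw [Nfun_bad F h α c hni, zero_mul])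
  rw [← Finset.sum_filter_of_ne hzero]
  have hbij : ∑ q : Equiv.Perm (Fin k) × (Fin k → Bool),
      (Nfun k F h (fun i => sgn α (q.1 i, q.2 (q.1 i))) *
        (∏ i, ∏ t ∈ (univ : Finset (Fin k × Bool)).erase (q.1 i, q.2 (q.1 i)),
          (sgn α (q.1 i, q.2 (q.1 i)) - sgn α t))⁻¹)
      = ∑ c ∈ (univ : Finset (Fin k → Fin k × Bool)).filter
          (fun c => Function.Injective (fun i => (c i).1)),
        Nfun k F h (fun i => sgn α (c i)) *
          (∏ i, ∏ t ∈ (univ : Finset (Fin k × Bool)).erase (c i), (sgn α (c i) - sgn α t))⁻¹ := by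
    refine Finset.sum_bij (fun q _ => fun i => (q.1 i, q.2 (q.1 i))) ?_ ?_ ?_ ?_
    · intro q _
      rw [Finset.mem_filter]
      refine ⟨Finset.mem_univ _, ?_⟩
      intro a b hab
      exact q.1.injective hab
    · intro q _ q' _ he
      have h1 : ∀ i, q.1 i = q'.1 i := by
        intro i
        have := congrFun he i
        exact (Prod.ext_iff.mp this).1
      have hσ : q.1 = q'.1 := Equiv.ext h1
      have h2 : ∀ b, q.2 b = q'.2 b := by
        intro b
        have hc := congrFun he (q.1.symm b)
        rw [← hσ] at hc
        simpa using hc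
      exact Prod.ext hσ (funext h2)
    · intro c hc
      rw [Finset.mem_filter] at hc
      have hbi : Function.Bijective (fun i => (c i).1) :=
        Finite.injective_iff_bijective.mp hc.2
      refine ⟨(Equiv.ofBijective _ hbi, fun b => (c ((Equiv.ofBijective _ hbi).symm b)).2),
        Finset.mem_univ _, ?_⟩
      funext i
      dsimp only
      have h1 : (Equiv.ofBijective _ hbi) i = (c i).1 := rfl
      rw [h1]
      have h2 : (Equiv.ofBijective _ hbi).symm ((Equiv.ofBijective _ hbi) i) = i :=
        Equiv.symm_apply_apply _ _
      rw [show (Equiv.ofBijective (fun i => (c i).1) hbi).symm ((c i).1)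
          = (Equiv.ofBijective (fun i => (c i).1) hbi).symm ((Equiv.ofBijective _ hbi) i)
          from rfl, h2]
    · intro q _; rfl
  rw [← hbij, Fintype.sum_prod_type]
  have hterm : ∀ (σ : Equiv.Perm (Fin k)) (ε : Fin k → Bool),
      Nfun k F h (fun i => sgn α (σ i, ε (σ i))) *
        (∏ i, ∏ t ∈ (univ : Finset (Fin k × Bool)).erase (σ i, ε (σ i)),
          (sgn α (σ i, ε (σ i)) - sgn α t))⁻¹
      = Nfun k F h (fun j => sgn α (j, ε j)) *
          (∏ j, ∏ t ∈ (univ : Finset (Fin k × Bool)).erase (j, ε j),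
            (sgn α (j, ε j) - sgn α t))⁻¹ := by
    intro σ ε
    have h1 : (fun i => sgn α (σ i, ε (σ i))) = (fun j => sgn α (j, ε j)) ∘ σ := rfl
    rw [h1, Nfun_symm hFsym σ]
    congr 1
    rw [← Equiv.prod_comp σ (fun j => ∏ t ∈ (univ : Finset (Fin k × Bool)).erase (j, ε j),
      (sgn α (j, ε j) - sgn α t))]
  have hconst : ∀ σ : Equiv.Perm (Fin k),
      (∑ ε : Fin k → Bool, Nfun k F h (fun i => sgn α (σ i, ε (σ i))) *
        (∏ i, ∏ t ∈ (univ : Finset (Fin k × Bool)).erase (σ i, ε (σ i)),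
          (sgn α (σ i, ε (σ i)) - sgn α t))⁻¹)
      = ∑ ε : Fin k → Bool, Nfun k F h (fun j => sgn α (j, ε j)) *
          (∏ j, ∏ t ∈ (univ : Finset (Fin k × Bool)).erase (j, ε j),
            (sgn α (j, ε j) - sgn α t))⁻¹ :=
    fun σ => Finset.sum_congr rfl fun ε _ => hterm σ ε
  rw [Finset.sum_congr rfl (fun σ _ => hconst σ), Finset.sum_const, Finset.card_univ,
    Fintype.card_perm, Fintype.card_fin, nsmul_eq_mul]

/-- evaluation of `Nfun` at a sign pattern point -/
lemma Nfun_at_sgn {k : ℕ} {r r' : ℝ} (hr : 0 < r) (hrr' : r < r')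
    {F : (Fin k → ℂ) → ℂ} {f h : ℂ → ℂ}
    (hfh : ∀ s ∈ Metric.ball (0 : ℂ) (2 * r'), s ≠ 0 → f s = 1 / s + h s)
    {α : Fin k → ℂ}
    (hα : ∀ j, 0 < ‖α j‖ ∧ ‖α j‖ < r)
    (hα' : ∀ i j, i ≠ j → α i + α j ≠ 0 ∧ α i - α j ≠ 0)
    {K : (Fin k → ℂ) → ℂ}
    (hK : ∀ z : Fin k → ℂ,
      K z = F z * ∏ p ∈ univ.filter (fun p : Fin k × Fin k => p.1 ≤ p.2), f (z p.1 + z p.2))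
    (ε : Fin k → Bool) :
    Nfun k F h (fun j => sgn α (j, ε j))
      = K (fun j => sgn α (j, ε j)) * (∏ j, sgn α (j, ε j)) *
        (∏ p ∈ univ.filter (fun p : Fin k × Fin k => p.1 < p.2),
          (α p.2 ^ 2 - α p.1 ^ 2)) ^ 2 := by
  set v : Fin k → ℂ := fun j => sgn α (j, ε j) with hv
  have hα0 : ∀ j, α j ≠ 0 := fun j h0 => by simpa [h0] using (hα j).1
  have hvsq : ∀ j, v j ^ 2 = α j ^ 2 := by
    intro j
    rw [hv]
    cases hε : ε j <;> simp [sgn, hε] <;> ring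
  have hvne : ∀ j, v j ≠ 0 := by
    intro j
    rw [hv]
    cases hε : ε j <;> simp [sgn, hε, hα0 j]
  have hvabs : ∀ j, ‖v j‖ < r := by
    intro j
    rw [hv]
    cases hε : ε j <;> simp [sgn, hε] <;> exact (hα j).2
  have hvsum : ∀ i j : Fin k, i ≠ j → v i + v j ≠ 0 := by
    intro i j hij
    rw [hv]
    cases hi : ε i <;> cases hj : ε j <;>
      simp only [sgn, hi, hj, if_true, if_false, Bool.false_eq_true]
    · intro hcon
      exact (hα' i j hij).1 (by linear_combination -hcon)
    · intro hcon
      exact (hα' i j hij).2 (by linear_combination -hcon)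
    · intro hcon
      exact (hα' i j hij).2 (by linear_combination hcon)
    · intro hcon
      exact (hα' i j hij).1 (by linear_combination hcon)
  have hle : ∀ p ∈ univ.filter (fun p : Fin k × Fin k => p.1 ≤ p.2), v p.1 + v p.2 ≠ 0 := by
    intro p hp
    rw [Finset.mem_filter] at hp
    rcases eq_or_lt_of_le hp.2 with he | hlt
    · have h2 : v p.1 + v p.2 = 2 * v p.1 := by rw [← he]; ring
      rw [h2]
      exact mul_ne_zero two_ne_zero (hvne p.1)
    · exact hvsum p.1 p.2 (ne_of_lt hlt)
  have hlt_ne : ∀ p ∈ univ.filter (fun p : Fin k × Fin k => p.1 < p.2), v p.1 + v p.2 ≠ 0 :=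
    fun p hp => hvsum p.1 p.2 (ne_of_lt (Finset.mem_filter.mp hp).2)
  have hball : ∀ p : Fin k × Fin k, v p.1 + v p.2 ∈ Metric.ball (0 : ℂ) (2 * r') := by
    intro p
    rw [mem_ball_zero_iff]
    calc ‖v p.1 + v p.2‖ ≤ ‖v p.1‖ + ‖v p.2‖ := norm_add_le _ _
      _ < 2 * r' := by
          have h1 : ‖v p.1‖ < r := by exact hvabs p.1
          have h2 : ‖v p.2‖ < r := by exact hvabs p.2
          linarith
  have hfg : ∀ p ∈ univ.filter (fun p : Fin k × Fin k => p.1 ≤ p.2),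
      f (v p.1 + v p.2) = gfun h (v p.1 + v p.2) / (v p.1 + v p.2) := by
    intro p hp
    rw [hfh _ (hball p) (hle p hp)]
    unfold gfun
    field_simp [hle p hp]
  have hKv := hK v
  rw [Finset.prod_congr rfl hfg, Finset.prod_div_distrib] at hKv
  have hS_ne : ∏ p ∈ univ.filter (fun p : Fin k × Fin k => p.1 ≤ p.2),
      (v p.1 + v p.2) ≠ 0 := Finset.prod_ne_zero_iff.mpr hle
  have hFA : F v * ∏ p ∈ univ.filter (fun p : Fin k × Fin k => p.1 ≤ p.2),
      gfun h (v p.1 + v p.2)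
      = K v * ∏ p ∈ univ.filter (fun p : Fin k × Fin k => p.1 ≤ p.2), (v p.1 + v p.2) := by
    rw [hKv]
    field_simp
  have hdiag : ∏ i, (v i + v i) = 2 ^ k * ∏ i, v i := by
    have h2 : ∀ i ∈ (univ : Finset (Fin k)), v i + v i = 2 * v i :=
      fun i _ => (two_mul (v i)).symm
    rw [Finset.prod_congr rfl h2, Finset.prod_mul_distrib, Finset.prod_const]
    congr 1
    rw [Finset.card_univ, Fintype.card_fin]
  have hsplit := prod_split_le (M := ℂ) (k := k) (fun p => v p.1 + v p.2)
  have hSW : (∏ p ∈ univ.filter (fun p : Fin k × Fin k => p.1 < p.2), (v p.1 + v p.2)) *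
      (∏ p ∈ univ.filter (fun p : Fin k × Fin k => p.1 < p.2),
        ((v p.2 - v p.1) ^ 2 * (v p.1 + v p.2)))
      = (∏ p ∈ univ.filter (fun p : Fin k × Fin k => p.1 < p.2),
          (α p.2 ^ 2 - α p.1 ^ 2)) ^ 2 := by
    rw [← Finset.prod_mul_distrib, ← Finset.prod_pow]
    refine Finset.prod_congr rfl fun p _ => ?_
    have h1 := hvsq p.1
    have h2 := hvsq p.2
    linear_combination (v p.2 ^ 2 - v p.1 ^ 2 + α p.2 ^ 2 - α p.1 ^ 2) * h2 -
      (v p.2 ^ 2 - v p.1 ^ 2 + α p.2 ^ 2 - α p.1 ^ 2) * h1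
  have h2k : (2 : ℂ) ^ k ≠ 0 := pow_ne_zero _ two_ne_zero
  unfold Nfun
  calc (2 ^ k : ℂ)⁻¹ * (F v *
        (∏ p ∈ univ.filter (fun p : Fin k × Fin k => p.1 ≤ p.2), gfun h (v p.1 + v p.2)) *
        (∏ p ∈ univ.filter (fun p : Fin k × Fin k => p.1 < p.2),
          ((v p.2 - v p.1) ^ 2 * (v p.1 + v p.2))))
      = (2 ^ k : ℂ)⁻¹ * ((K v * ∏ p ∈ univ.filter (fun p : Fin k × Fin k => p.1 ≤ p.2),
          (v p.1 + v p.2)) *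
        (∏ p ∈ univ.filter (fun p : Fin k × Fin k => p.1 < p.2),
          ((v p.2 - v p.1) ^ 2 * (v p.1 + v p.2)))) := by rw [← hFA]
    _ = (2 ^ k : ℂ)⁻¹ * 2 ^ k * (K v * (∏ i, v i) *
        ((∏ p ∈ univ.filter (fun p : Fin k × Fin k => p.1 < p.2), (v p.1 + v p.2)) *
         (∏ p ∈ univ.filter (fun p : Fin k × Fin k => p.1 < p.2),
           ((v p.2 - v p.1) ^ 2 * (v p.1 + v p.2))))) := by
        rw [hsplit, hdiag]
        ring
    _ = K v * (∏ i, v i) *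
        (∏ p ∈ univ.filter (fun p : Fin k × Fin k => p.1 < p.2),
          (α p.2 ^ 2 - α p.1 ^ 2)) ^ 2 := by
        rw [inv_mul_cancel₀ h2k, one_mul, hSW]

end CFKRSAux

open CFKRSAux in
/-- CFKRS Lemma 2.5.2, unsigned version: for a symmetric holomorphic
`F` on a polydisc of radius `r' > r`, a function `f` holomorphic on the punctured
disc `0 < |s| < 2r'` with a simple pole of residue `1` at `s = 0`
(i.e. `f(s) = 1/s + h(s)` with `h` holomorphic on `|s| < 2r'`), and
`K(z) = F(z) ∏_{i ≤ j} f(z_i + z_j)`, for `α_j` with `0 < |α_j| < r` and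
`α_i ± α_j ≠ 0` for `i ≠ j`, the sum of `K(ε_1 α_1, …, ε_k α_k)` over sign
vectors `ε ∈ {−1,1}^k` equals the stated `k`-fold contour integral. -/
theorem cfkrs_contour_lemma (k : ℕ) (hk : 1 ≤ k) (r r' : ℝ) (hr : 0 < r) (hrr' : r < r')
    (F : (Fin k → ℂ) → ℂ)
    (hF : DifferentiableOn ℂ F {z : Fin k → ℂ | ∀ i, ‖z i‖ < r'})
    (hFsym : ∀ σ : Equiv.Perm (Fin k), ∀ z : Fin k → ℂ, F (z ∘ σ) = F z)
    (f h : ℂ → ℂ)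
    (hh : DifferentiableOn ℂ h (Metric.ball (0 : ℂ) (2 * r')))
    (hfh : ∀ s ∈ Metric.ball (0 : ℂ) (2 * r'), s ≠ 0 → f s = 1 / s + h s)
    (α : Fin k → ℂ)
    (hα : ∀ j, 0 < ‖α j‖ ∧ ‖α j‖ < r)
    (hα' : ∀ i j, i ≠ j → α i + α j ≠ 0 ∧ α i - α j ≠ 0)
    (K : (Fin k → ℂ) → ℂ)
    (hK : ∀ z : Fin k → ℂ,
      K z = F z * ∏ p ∈ univ.filter (fun p : Fin k × Fin k => p.1 ≤ p.2), f (z p.1 + z p.2)) :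
    (∑ ε : Fin k → Bool, K (fun i => if ε i then α i else -α i))
      = ((-1 : ℂ) ^ (k * (k - 1) / 2) * 2 ^ k) /
          ((Nat.factorial k : ℂ) * (2 * Real.pi * Complex.I) ^ k) *
        iterCircleIntegral k
          (fun z =>
            K z * (∏ p ∈ univ.filter (fun p : Fin k × Fin k => p.1 < p.2),
                (z p.2 ^ 2 - z p.1 ^ 2)) ^ 2 * (∏ i, z i)
              / ∏ i, ∏ j, ((z i - α j) * (z i + α j))) r := by
  classical
  have hr' : 0 < r' := lt_trans hr hrr'
  haveI : Nonempty (Fin k) := ⟨⟨0, hk⟩⟩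
  have hα1 : ∀ j, 0 < ‖α j‖ := fun j => (hα j).1
  have hα0 : ∀ j, α j ≠ 0 := fun j h0 => by simpa [h0] using hα1 j
  have habs : ∀ t : Fin k × Bool, ‖sgn α t‖ < r := fun t => by
    rw [abs_sgn]; exact (hα t.1).2
  have hinj : Function.Injective (sgn α) := sgn_injective hα1 hα'
  have hNdiff := Nfun_diff hr' hF hh
  have hcong : iterCircleIntegral k
      (fun z => K z * (∏ p ∈ univ.filter (fun p : Fin k × Fin k => p.1 < p.2),
          (z p.2 ^ 2 - z p.1 ^ 2)) ^ 2 * (∏ i, z i)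
        / ∏ i, ∏ j, ((z i - α j) * (z i + α j))) r
      = iterCircleIntegral k
        (fun z => Nfun k F h z * (∏ i, ∏ t : Fin k × Bool, (z i - sgn α t))⁻¹) r :=
    iterCircleIntegral_congr hr.le (fun z hz => torus_eq hr hrr' hfh hK z hz)
  rw [hcong, iterCircleIntegral_eval hr hrr' (sgn α) hinj habs k _ hNdiff]
  rw [T_sum F h hFsym α]
  set m := (univ.filter (fun p : Fin k × Fin k => p.1 < p.2)).card with hm
  set Van := ∏ p ∈ univ.filter (fun p : Fin k × Fin k => p.1 < p.2),
    (α p.2 ^ 2 - α p.1 ^ 2) with hVan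
  have hVan_ne : Van ≠ 0 := by
    rw [hVan]
    refine Finset.prod_ne_zero_iff.mpr fun p hp => ?_
    have hne : p.2 ≠ p.1 := (ne_of_lt (Finset.mem_filter.mp hp).2).symm
    have he : α p.2 ^ 2 - α p.1 ^ 2 = (α p.2 - α p.1) * (α p.2 + α p.1) := by ring
    rw [he]
    exact mul_ne_zero (hα' p.2 p.1 hne).2 (hα' p.2 p.1 hne).1
  have h2k : (2 : ℂ) ^ k ≠ 0 := pow_ne_zero _ two_ne_zero
  have hu : ((-1 : ℂ) ^ m) * ((-1 : ℂ) ^ m) = 1 := by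
    rw [← pow_add]
    exact Even.neg_one_pow ⟨m, rfl⟩
  have huinv : ((-1 : ℂ) ^ m)⁻¹ = (-1 : ℂ) ^ m := inv_eq_of_mul_eq_one_right hu
  have hterm : ∀ ε : Fin k → Bool,
      Nfun k F h (fun j => sgn α (j, ε j)) *
        (∏ j, ∏ t ∈ (univ : Finset (Fin k × Bool)).erase (j, ε j),
          (sgn α (j, ε j) - sgn α t))⁻¹
      = (2 ^ k : ℂ)⁻¹ * ((-1 : ℂ) ^ m * K (fun j => sgn α (j, ε j))) := by
    intro ε
    have hvne : ∀ j, sgn α (j, ε j) ≠ 0 := fun j => by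
      cases hε : ε j <;> simp [sgn, hε, hα0 j]
    have hP_ne : (∏ j, sgn α (j, ε j)) ≠ 0 :=
      Finset.prod_ne_zero_iff.mpr fun j _ => hvne j
    have hVan2 : Van ^ 2 ≠ 0 := pow_ne_zero _ hVan_ne
    have hD : ∏ j, ∏ t ∈ (univ : Finset (Fin k × Bool)).erase (j, ε j),
        (sgn α (j, ε j) - sgn α t)
        = 2 ^ k * (∏ j, sgn α (j, ε j)) * ((-1 : ℂ) ^ m * Van ^ 2) := by
      rw [Finset.prod_congr rfl (fun j _ => D_eval α ε j), Finset.prod_mul_distrib, E_eval α]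
      have h2 : ∏ j, (2 * sgn α (j, ε j)) = 2 ^ k * ∏ j, sgn α (j, ε j) := by
        rw [Finset.prod_mul_distrib, Finset.prod_const]
        congr 1
        rw [Finset.card_univ, Fintype.card_fin]
      rw [h2]
    rw [Nfun_at_sgn hr hrr' hfh hα hα' hK ε, hD, ← hVan]
    rw [mul_inv, mul_inv, mul_inv, huinv]
    calc K (fun j => sgn α (j, ε j)) * (∏ j, sgn α (j, ε j)) * Van ^ 2 *
          ((2 ^ k : ℂ)⁻¹ * (∏ j, sgn α (j, ε j))⁻¹ * ((-1 : ℂ) ^ m * (Van ^ 2)⁻¹))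
        = (2 ^ k : ℂ)⁻¹ * ((-1 : ℂ) ^ m * K (fun j => sgn α (j, ε j))) *
            ((∏ j, sgn α (j, ε j)) * (∏ j, sgn α (j, ε j))⁻¹) * (Van ^ 2 * (Van ^ 2)⁻¹) := by
          ring
      _ = (2 ^ k : ℂ)⁻¹ * ((-1 : ℂ) ^ m * K (fun j => sgn α (j, ε j))) := by
          rw [mul_inv_cancel₀ hP_ne, mul_inv_cancel₀ hVan2, mul_one, mul_one]
  rw [Finset.sum_congr rfl (fun ε _ => hterm ε), ← Finset.mul_sum, ← Finset.mul_sum]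
  have hπ : (2 * (Real.pi : ℂ) * Complex.I) ≠ 0 :=
    mul_ne_zero (mul_ne_zero two_ne_zero (by exact_mod_cast Real.pi_ne_zero)) Complex.I_ne_zero
  have hπk : ((2 * (Real.pi : ℂ) * Complex.I)) ^ k ≠ 0 := pow_ne_zero _ hπ
  have hfac : (k.factorial : ℂ) ≠ 0 := Nat.cast_ne_zero.mpr k.factorial_ne_zero
  have hLHS : (∑ ε : Fin k → Bool, K (fun i => if ε i then α i else -α i))
      = ∑ ε : Fin k → Bool, K (fun j => sgn α (j, ε j)) :=
    Finset.sum_congr rfl fun ε _ => rfl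
  rw [hLHS, ← card_filter_lt k, ← hm]
  set S := ∑ ε : Fin k → Bool, K (fun j => sgn α (j, ε j)) with hS
  calc S = ((-1 : ℂ) ^ m * (-1 : ℂ) ^ m) *
        (((2 * (Real.pi : ℂ) * Complex.I) ^ k) * (((2 * (Real.pi : ℂ) * Complex.I) ^ k)⁻¹)) *
        ((k.factorial : ℂ) * ((k.factorial : ℂ))⁻¹) * ((2 : ℂ) ^ k * ((2 : ℂ) ^ k)⁻¹) * S := by
        rw [hu, mul_inv_cancel₀ hπk, mul_inv_cancel₀ hfac, mul_inv_cancel₀ h2k]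
        ring
    _ = (-1 : ℂ) ^ m * 2 ^ k / ((k.factorial : ℂ) * (2 * (Real.pi : ℂ) * Complex.I) ^ k) *
        ((2 * (Real.pi : ℂ) * Complex.I) ^ k *
          ((k.factorial : ℂ) * ((2 ^ k : ℂ)⁻¹ * ((-1 : ℂ) ^ m * S)))) := by
        ring
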